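/- In the adding-candidates construction for constructive control (with spoiler candidates B from a graph G, qualified candidates {c,w} ∪ X ∪ Y ∪ Z with ‖X‖ = n−1, ‖Y‖ = n−2, ‖Z‖ = n−1, and the 2n+1 voters as specified), before adding any spoiler candidates, c is the unique fallback voting winner of the election (C−B, V): c and w are the only candidates with a strict majority of approvals, both first attaining strict majority at level n, with level-n scores 2n for c and n+1 for w. -/

import Mathlib

/- Fallback voting framework.  A ballot is the linearly ordered list of a voter's
approved candidates (most preferred first); an election is a list of ballots. -/
namespace FV

variable {α : Type*} [DecidableEq α]

/-- The level-`i` score of candidate `c`: the number of voters who approve `c`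
and rank `c` among their top `i` approved candidates. -/
def levelScore (V : List (List α)) (i : ℕ) (c : α) : ℕ :=
  (V.filter (fun b => decide (c ∈ b.take i))).length

/-- The overall approval score of candidate `c`. -/
def score (V : List (List α)) (c : α) : ℕ :=
  (V.filter (fun b => decide (c ∈ b))).length

/-- `c` has a strict majority of approvals at level `i`. -/
def MajAt (V : List (List α)) (i : ℕ) (c : α) : Prop :=
  2 * levelScore V i c > V.length

/-- `c` is a fallback voting winner of the election with candidate set `Cs`
and voter list `V`:  either at the first level (up to `‖Cs‖`) at which some
candidate attains a strict majority, `c` has a strict majority and maximal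
level score among strict-majority candidates; or no candidate ever attains a
strict majority and `c` has maximal overall approval score. -/
def FVWinner (Cs : Finset α) (V : List (List α)) (c : α) : Prop :=
  c ∈ Cs ∧
    ((∃ i, 1 ≤ i ∧ i ≤ Cs.card ∧ MajAt V i c ∧
        (∀ j, j < i → ∀ d ∈ Cs, ¬ MajAt V j d) ∧
        (∀ d ∈ Cs, MajAt V i d → levelScore V i d ≤ levelScore V i c)) ∨
     ((∀ i, i ≤ Cs.card → ∀ d ∈ Cs, ¬ MajAt V i d) ∧
        ∀ d ∈ Cs, score V d ≤ score V c))

/-- `c` is the unique fallback voting winner. -/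
def UniqueFVWinner (Cs : Finset α) (V : List (List α)) (c : α) : Prop :=
  FVWinner Cs V c ∧ ∀ d, FVWinner Cs V d → d = c

end FV

/- The adding-candidates constructive construction before any spoiler is
added: qualified candidates `{c,w} ∪ X ∪ Y ∪ Z` with `‖X‖ = n-1`,
`‖Y‖ = n-2`, `‖Z‖ = n-1`, and `2n+1` voters: `n` voters approving `X` then
`c`; `n` voters approving `Y` then `c` then `w`; one voter approving `Z`
then `w`.  (Vertex candidates are present in the type but removed from the
candidate set.) -/
namespace AC

abbrev Cand (n : ℕ) :=
  Sum (Fin n) (Sum (Fin (n - 1)) (Sum (Fin (n - 2)) (Sum (Fin (n - 1)) Bool)))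

def bC {n : ℕ} (b : Fin n) : Cand n := Sum.inl b
def xC {n : ℕ} (j : Fin (n - 1)) : Cand n := Sum.inr (Sum.inl j)
def yC {n : ℕ} (j : Fin (n - 2)) : Cand n := Sum.inr (Sum.inr (Sum.inl j))
def zC {n : ℕ} (j : Fin (n - 1)) : Cand n := Sum.inr (Sum.inr (Sum.inr (Sum.inl j)))
def cC (n : ℕ) : Cand n := Sum.inr (Sum.inr (Sum.inr (Sum.inr false)))
def wC (n : ℕ) : Cand n := Sum.inr (Sum.inr (Sum.inr (Sum.inr true)))

def Xlist (n : ℕ) : List (Cand n) := (List.finRange (n - 1)).map xC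
def Ylist (n : ℕ) : List (Cand n) := (List.finRange (n - 2)).map yC
def Zlist (n : ℕ) : List (Cand n) := (List.finRange (n - 1)).map zC

/-- The `2n+1` voters of the election `(C−B, V)` (no spoilers added). -/
def election0 (n : ℕ) : List (List (Cand n)) :=
  List.replicate n (Xlist n ++ [cC n]) ++
    List.replicate n (Ylist n ++ [cC n, wC n]) ++
    [Zlist n ++ [wC n]]

/-- The qualified candidate set `C − B`. -/
def candSet0 (n : ℕ) : Finset (Cand n) :=
  Finset.univ \ (Finset.univ.image (bC (n := n)))

end AC


namespace AC

variable {n : ℕ}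

@[simp] lemma length_Xlist : (Xlist n).length = n - 1 := by simp [Xlist]
@[simp] lemma length_Ylist : (Ylist n).length = n - 2 := by simp [Ylist]
@[simp] lemma length_Zlist : (Zlist n).length = n - 1 := by simp [Zlist]

def b1 (n : ℕ) : List (Cand n) := Xlist n ++ [cC n]
def b2 (n : ℕ) : List (Cand n) := Ylist n ++ [cC n, wC n]
def b3 (n : ℕ) : List (Cand n) := Zlist n ++ [wC n]

@[simp] lemma length_b1 (hn : 1 ≤ n) : (b1 n).length = n := by simp [b1]; omega
@[simp] lemma length_b2 (hn : 2 ≤ n) : (b2 n).length = n := by simp [b2]; omega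
@[simp] lemma length_b3 (hn : 1 ≤ n) : (b3 n).length = n := by simp [b3]; omega

instance instMemDec (d : Cand n) (l : List (Cand n)) : Decidable (d ∈ l) :=
  decidable_of_iff (∃ x ∈ l, x = d) (by simp)

lemma levelScore_eq (i : ℕ) (d : Cand n) :
    FV.levelScore (election0 n) i d =
      (if d ∈ (b1 n).take i then n else 0) +
      (if d ∈ (b2 n).take i then n else 0) +
      (if d ∈ (b3 n).take i then 1 else 0) := by
  simp only [FV.levelScore, election0, List.filter_append, List.filter_replicate,
    List.length_append, b1, b2, b3, decide_eq_true_eq]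
  split_ifs <;> simp_all <;> by_cases h : d ∈ List.take i (Zlist n ++ [wC n]) <;> simp [h, List.filter_cons]

lemma cC_mem_b1_take (hn : 1 ≤ n) (i : ℕ) : cC n ∈ (b1 n).take i ↔ n ≤ i := by
  constructor
  · intro h
    by_contra hi
    rw [b1, List.take_append_of_le_length (by simp; omega)] at h
    have := List.mem_of_mem_take h
    simp [Xlist, xC, cC] at this
  · intro h
    rw [List.take_of_length_le (by rw [length_b1 hn]; exact h)]
    simp [b1]

lemma cC_mem_b2_take (hn : 2 ≤ n) (i : ℕ) : cC n ∈ (b2 n).take i ↔ n - 1 ≤ i := by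
  constructor
  · intro h
    by_contra hi
    rw [b2, List.take_append_of_le_length (by simp; omega)] at h
    have := List.mem_of_mem_take h
    simp [Ylist, yC, cC] at this
  · intro h
    rw [b2, List.take_append]
    have : 1 ≤ i - (Ylist n).length := by simp; omega
    rcases Nat.exists_eq_add_of_le this with ⟨k, hk⟩
    have hk' : i - (Ylist n).length = k + 1 := by omega
    refine List.mem_append.2 (Or.inr ?_)
    rw [hk']
    simp [List.take_succ_cons]

lemma cC_not_mem_b3_take (i : ℕ) : cC n ∉ (b3 n).take i := by
  intro h
  have := List.mem_of_mem_take h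
  simp [b3, Zlist, zC, cC, wC] at this

lemma wC_not_mem_b1_take (i : ℕ) : wC n ∉ (b1 n).take i := by
  intro h
  have := List.mem_of_mem_take h
  simp [b1, Xlist, xC, cC, wC] at this

lemma wC_mem_b2_take (hn : 2 ≤ n) (i : ℕ) : wC n ∈ (b2 n).take i ↔ n ≤ i := by
  constructor
  · intro h
    by_contra hi
    have h2 : wC n ∈ ((Ylist n).take i ++ (List.take (i - (n-2)) [cC n, wC n])) := by
      rw [b2, List.take_append] at h; simpa using h
    rcases List.mem_append.1 h2 with h' | h'
    · have := List.mem_of_mem_take h'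
      simp [Ylist, yC, wC] at this
    · have hlt : i - (n - 2) ≤ 1 := by omega
      have := List.mem_of_mem_take (l := [cC n]) (by
        have : List.take (i - (n-2)) [cC n, wC n] = List.take (i - (n-2)) ([cC n] ++ [wC n]) := rfl
        rw [this, List.take_append_of_le_length (by simpa using hlt)] at h'
        exact h')
      simp [cC, wC] at this
  · intro h
    rw [List.take_of_length_le (by rw [length_b2 hn]; exact h)]
    simp [b2]

lemma wC_mem_b3_take (hn : 1 ≤ n) (i : ℕ) : wC n ∈ (b3 n).take i ↔ n ≤ i := by
  constructor
  · intro h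
    by_contra hi
    rw [b3, List.take_append_of_le_length (by simp; omega)] at h
    have := List.mem_of_mem_take h
    simp [Zlist, zC, wC] at this
  · intro h
    rw [List.take_of_length_le (by rw [length_b3 hn]; exact h)]
    simp [b3]

end AC

namespace AC2
open AC FV

variable {n : ℕ}

lemma not_mem_b2_x (i : ℕ) (j : Fin (n-1)) : xC j ∉ (b2 n).take i := fun h => by
  have := List.mem_of_mem_take h; simp [b2, Ylist, yC, xC, cC, wC] at this
lemma not_mem_b3_x (i : ℕ) (j : Fin (n-1)) : xC j ∉ (b3 n).take i := fun h => by
  have := List.mem_of_mem_take h; simp [b3, Zlist, zC, xC, wC] at this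
lemma not_mem_b1_y (i : ℕ) (j : Fin (n-2)) : yC j ∉ (b1 n).take i := fun h => by
  have := List.mem_of_mem_take h; simp [b1, Xlist, xC, yC, cC] at this
lemma not_mem_b3_y (i : ℕ) (j : Fin (n-2)) : yC j ∉ (b3 n).take i := fun h => by
  have := List.mem_of_mem_take h; simp [b3, Zlist, zC, yC, wC] at this
lemma not_mem_b1_z (i : ℕ) (j : Fin (n-1)) : zC j ∉ (b1 n).take i := fun h => by
  have := List.mem_of_mem_take h; simp [b1, Xlist, xC, zC, cC] at this
lemma not_mem_b2_z (i : ℕ) (j : Fin (n-1)) : zC j ∉ (b2 n).take i := fun h => by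
  have := List.mem_of_mem_take h; simp [b2, Ylist, yC, zC, cC, wC] at this

lemma ls_c (hn : 3 ≤ n) (i : ℕ) :
    levelScore (election0 n) i (cC n) =
      (if n ≤ i then n else 0) + (if n - 1 ≤ i then n else 0) := by
  rw [levelScore_eq]
  have h1 := cC_mem_b1_take (n := n) (by omega) i
  have h2 := cC_mem_b2_take (n := n) (by omega) i
  have h3 := cC_not_mem_b3_take (n := n) i
  by_cases k1 : n ≤ i <;> by_cases k2 : n - 1 ≤ i <;> simp_all <;> split_ifs <;> omega

lemma ls_w (hn : 3 ≤ n) (i : ℕ) :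
    levelScore (election0 n) i (wC n) = if n ≤ i then n + 1 else 0 := by
  rw [levelScore_eq]
  have h1 := wC_not_mem_b1_take (n := n) i
  have h2 := wC_mem_b2_take (n := n) (by omega) i
  have h3 := wC_mem_b3_take (n := n) (by omega) i
  by_cases k1 : n ≤ i <;> simp_all <;> split_ifs <;> omega

lemma ls_x_le (i : ℕ) (j : Fin (n-1)) : levelScore (election0 n) i (xC j) ≤ n := by
  rw [levelScore_eq]
  have h2 := not_mem_b2_x (n := n) i j
  have h3 := not_mem_b3_x (n := n) i j
  split_ifs <;> simp_all

lemma ls_y_le (i : ℕ) (j : Fin (n-2)) : levelScore (election0 n) i (yC j) ≤ n := by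
  rw [levelScore_eq]
  have h1 := not_mem_b1_y (n := n) i j
  have h3 := not_mem_b3_y (n := n) i j
  split_ifs <;> simp_all

lemma ls_z_le (i : ℕ) (j : Fin (n-1)) : levelScore (election0 n) i (zC j) ≤ 1 := by
  rw [levelScore_eq]
  have h1 := not_mem_b1_z (n := n) i j
  have h2 := not_mem_b2_z (n := n) i j
  split_ifs <;> simp_all

lemma len_election0 : (election0 n).length = 2 * n + 1 := by
  simp only [election0, List.length_append, List.length_replicate, List.length_cons,
    List.length_nil]
  omega

lemma majc (hn : 3 ≤ n) (i : ℕ) : MajAt (election0 n) i (cC n) ↔ n ≤ i := by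
  unfold MajAt
  rw [len_election0, ls_c hn i]
  split_ifs <;> omega

lemma majw (hn : 3 ≤ n) (i : ℕ) : MajAt (election0 n) i (wC n) ↔ n ≤ i := by
  unfold MajAt
  rw [len_election0, ls_w hn i]
  split_ifs <;> omega

lemma nmx (hn : 3 ≤ n) (i : ℕ) (j : Fin (n-1)) : ¬ MajAt (election0 n) i (xC j) := fun h => by
  unfold MajAt at h; rw [len_election0] at h; have := ls_x_le i j; omega
lemma nmy (hn : 3 ≤ n) (i : ℕ) (j : Fin (n-2)) : ¬ MajAt (election0 n) i (yC j) := fun h => by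
  unfold MajAt at h; rw [len_election0] at h; have := ls_y_le i j; omega
lemma nmz (hn : 3 ≤ n) (i : ℕ) (j : Fin (n-1)) : ¬ MajAt (election0 n) i (zC j) := fun h => by
  unfold MajAt at h; rw [len_election0] at h; have := ls_z_le i j; omega

lemma cC_mem : cC n ∈ candSet0 n := by simp [candSet0, cC, bC]
lemma bC_not_mem (b : Fin n) : bC b ∉ candSet0 n := by simp [candSet0, bC]

lemma card_le (hn : 3 ≤ n) : n ≤ (candSet0 n).card := by
  have hinj : Function.Injective (bC (n := n)) := fun a b h => Sum.inl.inj h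
  have h1 : (Finset.univ.image (bC (n := n))).card = n := by
    rw [Finset.card_image_of_injective _ hinj]
    simp
  rw [candSet0, Finset.card_sdiff_of_subset (Finset.subset_univ _), Finset.card_univ, h1]
  simp only [Cand, Fintype.card_sum, Fintype.card_fin, Fintype.card_bool]
  omega

lemma honly (hn : 3 ≤ n) : ∀ d ∈ candSet0 n, (∃ i, MajAt (election0 n) i d) →
    d = cC n ∨ d = wC n := by
  rintro d hd ⟨i, hi⟩
  rcases d with b | x | y | z | bl
  · exact absurd hd (bC_not_mem b)
  · exact absurd hi (nmx hn i x)
  · exact absurd hi (nmy hn i y)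
  · exact absurd hi (nmz hn i z)
  · cases bl
    · exact Or.inl rfl
    · exact Or.inr rfl

end AC2

/-- before adding any spoiler candidates, `c` is the unique
fallback winner of `(C−B, V)`: `c` and `w` are the only candidates ever
attaining a strict majority, both first attain it at level `n`, and their
level-`n` scores are `2n` and `n+1` respectively. -/
theorem fv_adding_candidates_initial_election {n : ℕ} (hn : 3 ≤ n) :
    FV.UniqueFVWinner (AC.candSet0 n) (AC.election0 n) (AC.cC n) ∧
    (∀ d ∈ AC.candSet0 n, (∃ i, FV.MajAt (AC.election0 n) i d) →
      d = AC.cC n ∨ d = AC.wC n) ∧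
    FV.MajAt (AC.election0 n) n (AC.cC n) ∧
    FV.MajAt (AC.election0 n) n (AC.wC n) ∧
    (∀ j, j < n → ¬ FV.MajAt (AC.election0 n) j (AC.cC n) ∧
      ¬ FV.MajAt (AC.election0 n) j (AC.wC n)) ∧
    FV.levelScore (AC.election0 n) n (AC.cC n) = 2 * n ∧
    FV.levelScore (AC.election0 n) n (AC.wC n) = n + 1 := by
  have hcard := AC2.card_le hn
  have hcmem := AC2.cC_mem (n := n)
  have honly := AC2.honly hn
  have majc := AC2.majc hn
  have majw := AC2.majw hn
  have lsc : FV.levelScore (AC.election0 n) n (AC.cC n) = 2 * n := by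
    rw [AC2.ls_c hn n]; split_ifs <;> omega
  have lsw : FV.levelScore (AC.election0 n) n (AC.wC n) = n + 1 := by
    rw [AC2.ls_w hn n]; split_ifs <;> omega
  have noearly : ∀ j, j < n → ∀ d ∈ AC.candSet0 n, ¬ FV.MajAt (AC.election0 n) j d := by
    intro j hj d hd hmaj
    rcases honly d hd ⟨j, hmaj⟩ with rfl | rfl
    · exact absurd ((majc j).1 hmaj) (by omega)
    · exact absurd ((majw j).1 hmaj) (by omega)
  have hmax : ∀ d ∈ AC.candSet0 n, FV.MajAt (AC.election0 n) n d →
      FV.levelScore (AC.election0 n) n d ≤ FV.levelScore (AC.election0 n) n (AC.cC n) := by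
    intro d hd hmaj
    rcases honly d hd ⟨n, hmaj⟩ with rfl | rfl
    · exact le_rfl
    · rw [lsc, lsw]; omega
  have hwin : FV.FVWinner (AC.candSet0 n) (AC.election0 n) (AC.cC n) :=
    ⟨hcmem, Or.inl ⟨n, by omega, hcard, (majc n).2 le_rfl, noearly, hmax⟩⟩
  refine ⟨⟨hwin, ?_⟩, honly, (majc n).2 le_rfl, (majw n).2 le_rfl,
    fun j hj => ⟨fun h => absurd ((majc j).1 h) (by omega),
      fun h => absurd ((majw j).1 h) (by omega)⟩, lsc, lsw⟩
  rintro d ⟨hdmem, hcase | ⟨hno, -⟩⟩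
  · obtain ⟨i, -, -, hmaj, hmin, hge⟩ := hcase
    have hin : i ≤ n := by
      by_contra h
      exact hmin n (by omega) _ hcmem ((majc n).2 le_rfl)
    rcases honly d hdmem ⟨i, hmaj⟩ with rfl | rfl
    · rfl
    · have hni : n ≤ i := (majw i).1 hmaj
      have : i = n := le_antisymm hin hni
      subst this
      have hle := hge _ hcmem ((majc i).2 le_rfl)
      rw [lsc, lsw] at hle
      omega
  · exact absurd ((majc n).2 le_rfl) (hno n hcard _ hcmem)
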